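/- Let G be a graph and r ≥ 1, and let H be an r-transitive fraternal augmentation of (an orientation of) G with maximum in-degree at most d. Then the weak r-colouring number of G is at most 2(d+1)². -/

import Mathlib

/-- `IsTFA D H`: `H` is a (tight) 1-transitive fraternal augmentation of the
directed graph `D`. -/
def IsTFA {V : Type*} (D H : V → V → Prop) : Prop :=
  (∀ u v, D u v → H u v) ∧
  (∀ u w v, D u w → D w v → H u v) ∧
  (∀ u v w, u ≠ v → D u w → D v w → H u v ∨ H v u)

/-- `IsAug D r H`: `H` is an `r`-transitive fraternal augmentation of `D`. -/
inductive IsAug {V : Type*} (D : V → V → Prop) : ℕ → (V → V → Prop) → Prop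
  | zero : IsAug D 0 D
  | succ {n : ℕ} {H H' : V → V → Prop} :
      IsAug D n H → IsTFA H H' → IsAug D (n + 1) H'

/-- Let `H` be an `r`-transitive fraternal augmentation of an
orientation of `G` with maximum in-degree at most `d`. Then the weak `r`-colouring
number of `G` is at most `2(d+1)^2`: there is a strict linear order `lt` on the
vertices such that for every vertex `v` the set `wreach_r[G,lt,v]` (consisting of
`v` together with all `u` below `v` joined to `v` by a path of length at most `r`
with no vertex below `u`) has at most `2(d+1)^2` elements. -/
lemma isAug_mono {V : Type*} {D : V → V → Prop} {n : ℕ} {H : V → V → Prop}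
    (h : IsAug D n H) : ∀ u v, D u v → H u v := by
  induction h with
  | zero => exact fun u v hd => hd
  | succ _ ht ih => exact fun u v hd => ht.1 u v (ih u v hd)

lemma key_lemma {V : Type*} {G : SimpleGraph V} {D : V → V → Prop}
    (horient : ∀ u v, G.Adj u v ↔ (D u v ∨ D v u))
    {n : ℕ} {H : V → V → Prop} (haug : IsAug D n H) :
    ∀ (H' : V → V → Prop), IsTFA H H' →
      ∀ (a b : V), a ≠ b → ∀ (p : G.Walk a b), p.length ≤ n + 1 →
        H' a b ∨ H' b a ∨ ∃ x ∈ p.support, H x a ∧ H x b := by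
  induction haug with
  | zero =>
    intro H' htfa a b hab p hlen
    cases p with
    | nil => exact absurd rfl hab
    | cons h q =>
      rename_i m
      have hq : q.length = 0 := by
        simp only [SimpleGraph.Walk.length_cons] at hlen; omega
      have hmb : m = b := q.eq_of_length_eq_zero hq
      subst hmb
      rcases (horient a m).1 h with hd | hd
      · exact Or.inl (htfa.1 _ _ hd)
      · exact Or.inr (Or.inl (htfa.1 _ _ hd))
  | @succ n H₀ H₁ haug0 htfa0 ih =>
    intro H' htfa a b hab p hlen
    cases p with
    | nil => exact absurd rfl hab
    | cons h q =>
      rename_i m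
      have hqlen : q.length ≤ n + 1 := by
        simp only [SimpleGraph.Walk.length_cons] at hlen; omega
      have hmem : ∀ x ∈ q.support, x ∈ (SimpleGraph.Walk.cons h q).support := by
        intro x hx
        rw [SimpleGraph.Walk.support_cons]
        exact List.mem_cons_of_mem _ hx
      by_cases hmb : m = b
      · subst hmb
        rcases (horient a m).1 h with hd | hd
        · exact Or.inl (htfa.1 _ _ (htfa0.1 _ _ (isAug_mono haug0 _ _ hd)))
        · exact Or.inr (Or.inl (htfa.1 _ _ (htfa0.1 _ _ (isAug_mono haug0 _ _ hd))))
      · rcases ih H₁ htfa0 m b hmb q hqlen with hmb1 | hbm1 | ⟨x, hxs, hxm, hxb⟩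
        · rcases (horient a m).1 h with hd | hd
          · exact Or.inl (htfa.2.1 a m b (htfa0.1 _ _ (isAug_mono haug0 _ _ hd)) hmb1)
          · exact Or.inr (Or.inr ⟨m, hmem m q.start_mem_support,
              htfa0.1 _ _ (isAug_mono haug0 _ _ hd), hmb1⟩)
        · rcases (horient a m).1 h with hd | hd
          · rcases htfa.2.2 a b m hab (htfa0.1 _ _ (isAug_mono haug0 _ _ hd)) hbm1 with h1 | h1
            · exact Or.inl h1
            · exact Or.inr (Or.inl h1)
          · exact Or.inr (Or.inl (htfa.2.1 b m a hbm1 (htfa0.1 _ _ (isAug_mono haug0 _ _ hd))))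
        · rcases (horient a m).1 h with hd | hd
          · have h0am : H₀ a m := isAug_mono haug0 _ _ hd
            by_cases hxa : x = a
            · subst hxa
              exact Or.inl (htfa.1 _ _ (htfa0.1 _ _ hxb))
            · rcases htfa0.2.2 x a m hxa hxm h0am with h1 | h1
              · exact Or.inr (Or.inr ⟨x, hmem x hxs, h1, htfa0.1 _ _ hxb⟩)
              · exact Or.inl (htfa.2.1 a x b h1 (htfa0.1 _ _ hxb))
          · have h1xa : H₁ x a := htfa0.2.1 x m a hxm (isAug_mono haug0 _ _ hd)
            exact Or.inr (Or.inr ⟨x, hmem x hxs, h1xa, htfa0.1 _ _ hxb⟩)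


lemma exists_low_deg {V : Type*} [Fintype V] [DecidableEq V] (H : V → V → Prop)
    [inst : ∀ u v, Decidable (H u v)] (d : ℕ)
    (hindeg : ∀ v, {u | H u v}.ncard ≤ d) (s : Finset V) (hs : s.Nonempty) :
    ∃ v ∈ s, (s.filter (fun u => u ≠ v ∧ (H u v ∨ H v u))).card ≤ 2 * d := by
  have hfil : ∀ v : V, (Finset.univ.filter (fun u => H u v)).card ≤ d := by
    intro v
    have h := hindeg v
    rwa [Set.ncard_eq_toFinset_card', Set.toFinset_setOf] at h
  set E : Finset (V × V) := (s ×ˢ s).filter (fun p => H p.1 p.2) with hE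
  set A : Finset (V × V) :=
    (s ×ˢ s).filter (fun p => p.1 ≠ p.2 ∧ (H p.1 p.2 ∨ H p.2 p.1)) with hA
  have hEcard : E.card ≤ s.card * d := by
    rw [Finset.card_eq_sum_card_fiberwise (f := Prod.snd) (t := s)
      (fun p hp => (Finset.mem_product.1 (Finset.mem_filter.1 hp).1).2)]
    calc ∑ v ∈ s, (E.filter fun p => p.2 = v).card ≤ ∑ _v ∈ s, d := by
          refine Finset.sum_le_sum fun v hv => ?_
          refine le_trans (Finset.card_le_card_of_injOn Prod.fst ?_ ?_) (hfil v)
          · intro p hp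
            simp only [Finset.mem_coe, hE, Finset.mem_filter, Finset.mem_product] at hp
            simp only [Finset.mem_coe, Finset.mem_filter, Finset.mem_univ, true_and]
            rw [← hp.2]
            exact hp.1.2
          · intro p hp q hq hpq
            simp only [Finset.coe_filter, Set.mem_setOf_eq] at hp hq
            exact Prod.ext hpq (hp.2.trans hq.2.symm)
      _ = s.card * d := by simp [Finset.sum_const, mul_comm]
  have hsum : ∑ v ∈ s, (s.filter fun u => u ≠ v ∧ (H u v ∨ H v u)).card ≤ A.card := by
    rw [Finset.card_eq_sum_card_fiberwise (f := Prod.snd) (t := s)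
      (fun p hp => (Finset.mem_product.1 (Finset.mem_filter.1 hp).1).2)]
    refine Finset.sum_le_sum fun v hv => ?_
    refine Finset.card_le_card_of_injOn (fun u => (u, v)) ?_ ?_
    · intro u hu
      simp only [Finset.mem_coe, Finset.mem_filter] at hu
      simp only [Finset.mem_coe, hA, Finset.mem_filter, Finset.mem_product]
      exact ⟨⟨⟨hu.1, hv⟩, hu.2⟩, trivial⟩
    · intro u _ w _ h
      exact congrArg Prod.fst h
  have hAsub : A ⊆ E ∪ E.image Prod.swap := by
    intro p hp
    simp only [hA, Finset.mem_filter, Finset.mem_product] at hp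
    rcases hp.2.2 with h | h
    · exact Finset.mem_union_left _ (Finset.mem_filter.2 ⟨Finset.mem_product.2 hp.1, h⟩)
    · refine Finset.mem_union_right _ (Finset.mem_image.2 ⟨(p.2, p.1), ?_, rfl⟩)
      exact Finset.mem_filter.2 ⟨Finset.mem_product.2 ⟨hp.1.2, hp.1.1⟩, h⟩
  have hAcard : A.card ≤ 2 * E.card := by
    calc A.card ≤ (E ∪ E.image Prod.swap).card := Finset.card_le_card hAsub
      _ ≤ E.card + (E.image Prod.swap).card := Finset.card_union_le _ _
      _ ≤ E.card + E.card := by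
          have := Finset.card_image_le (s := E) (f := Prod.swap)
          omega
      _ = 2 * E.card := by ring
  by_contra hcon
  push_neg at hcon
  have h1 : ∑ _v ∈ s, (2 * d + 1) ≤ ∑ v ∈ s, (s.filter fun u => u ≠ v ∧ (H u v ∨ H v u)).card :=
    Finset.sum_le_sum fun v hv => hcon v hv
  rw [Finset.sum_const, smul_eq_mul] at h1
  have h2 : s.card * (2 * d + 1) ≤ 2 * (s.card * d) := by
    calc s.card * (2 * d + 1) ≤ A.card := le_trans h1 hsum
      _ ≤ 2 * E.card := hAcard
      _ ≤ 2 * (s.card * d) := by omega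
  have h3 : 0 < s.card := Finset.card_pos.2 hs
  nlinarith

lemma build_order {V : Type*} [Fintype V] [DecidableEq V] (H : V → V → Prop)
    [inst : ∀ u v, Decidable (H u v)] (d : ℕ) (hindeg : ∀ v, {u | H u v}.ncard ≤ d) :
    ∀ (n : ℕ) (s : Finset V), s.card = n →
      ∃ f : V → ℕ, Set.InjOn f ↑s ∧ (∀ v ∈ s, f v < n) ∧
        ∀ v ∈ s, (s.filter fun u => f u < f v ∧ u ≠ v ∧ (H u v ∨ H v u)).card ≤ 2 * d := by
  intro n
  induction n with
  | zero =>
    intro s hs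
    have : s = ∅ := Finset.card_eq_zero.mp hs
    subst this
    exact ⟨fun _ => 0, by simp, by simp, by simp⟩
  | succ n ih =>
    intro s hs
    have hne : s.Nonempty := by rw [← Finset.card_pos, hs]; omega
    obtain ⟨v₀, hv₀s, hv₀⟩ := exists_low_deg H d hindeg s hne
    obtain ⟨f, hinj, hlt, hdeg⟩ := ih (s.erase v₀)
      (by rw [Finset.card_erase_of_mem hv₀s, hs]; rfl)
    refine ⟨fun u => if u = v₀ then n else f u, ?_, ?_, ?_⟩
    · intro u hu w hw h
      simp only at h
      by_cases hu0 : u = v₀ <;> by_cases hw0 : w = v₀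
      · rw [hu0, hw0]
      · rw [if_pos hu0, if_neg hw0] at h
        exact absurd h.symm (Nat.ne_of_lt (hlt w (Finset.mem_erase.2 ⟨hw0, hw⟩)))
      · rw [if_neg hu0, if_pos hw0] at h
        exact absurd h (Nat.ne_of_lt (hlt u (Finset.mem_erase.2 ⟨hu0, hu⟩)))
      · rw [if_neg hu0, if_neg hw0] at h
        exact hinj (Finset.mem_coe.2 (Finset.mem_erase.2 ⟨hu0, hu⟩))
          (Finset.mem_coe.2 (Finset.mem_erase.2 ⟨hw0, hw⟩)) h
    · intro v hv
      by_cases hv0 : v = v₀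
      · simp [hv0]
      · simp only [if_neg hv0]
        exact lt_trans (hlt v (Finset.mem_erase.2 ⟨hv0, hv⟩)) (Nat.lt_succ_self n)
    · intro v hv
      by_cases hv0 : v = v₀
      · subst hv0
        refine le_trans (Finset.card_le_card ?_) hv₀
        intro u hu
        simp only [Finset.mem_filter] at hu ⊢
        exact ⟨hu.1, hu.2.2⟩
      · refine le_trans (Finset.card_le_card ?_) (hdeg v (Finset.mem_erase.2 ⟨hv0, hv⟩))
        intro u hu
        simp only [Finset.mem_filter, if_neg hv0] at hu
        have hfv : f v < n := hlt v (Finset.mem_erase.2 ⟨hv0, hv⟩)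
        have hu0 : u ≠ v₀ := by
          intro h
          rw [if_pos h] at hu
          omega
        rw [if_neg hu0] at hu
        exact Finset.mem_filter.2 ⟨Finset.mem_erase.2 ⟨hu0, hu.1⟩, hu.2⟩

lemma ncard_biUnion_le' {V : Type*} [Fintype V] [DecidableEq V] (N : Finset V)
    (g : V → Set V) (k : ℕ) (hk : ∀ a ∈ N, (g a).ncard ≤ k) :
    (⋃ a ∈ N, g a).ncard ≤ N.card * k := by
  induction N using Finset.induction_on with
  | empty => simp
  | insert a t ha ih =>
    rw [Finset.set_biUnion_insert]
    calc (g a ∪ ⋃ x ∈ t, g x).ncard ≤ (g a).ncard + (⋃ x ∈ t, g x).ncard :=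
          Set.ncard_union_le _ _
      _ ≤ k + t.card * k := by
          have := ih (fun b hb => hk b (Finset.mem_insert_of_mem hb))
          have := hk a (Finset.mem_insert_self a t)
          omega
      _ ≤ (insert a t).card * k := by
          rw [Finset.card_insert_of_notMem ha]; ring_nf; omega



theorem wcol_le_of_aug {V : Type*} [Fintype V] (G : SimpleGraph V)
    (D H : V → V → Prop) (r d : ℕ) (hr : 1 ≤ r)
    (horient : ∀ u v, G.Adj u v ↔ (D u v ∨ D v u))
    (hnd : ∀ u v, ¬ (D u v ∧ D v u))
    (haug : IsAug D r H)
    (hindeg : ∀ v, {u | H u v}.ncard ≤ d) :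
    ∃ lt : V → V → Prop, IsStrictTotalOrder V lt ∧
      ∀ v : V,
        {u | u = v ∨ (lt u v ∧ ∃ p : G.Walk u v, p.length ≤ r ∧
          ∀ x ∈ p.support, ¬ lt x u)}.ncard ≤ 2 * (d + 1) ^ 2 := by
  classical
  cases haug with
  | zero => omega
  | @succ n H₀ _ haug0 htfa =>
    obtain ⟨f, hinj, -, hdeg⟩ := build_order H d hindeg Finset.univ.card Finset.univ rfl
    have hinj' : Function.Injective f := fun a b h =>
      hinj (by simp) (by simp) h
    refine ⟨fun u v => f u < f v, ?_, ?_⟩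
    · exact { trichotomous := fun a b h1 h2 => hinj' (le_antisymm (not_lt.1 h2) (not_lt.1 h1))
              irrefl := fun a => lt_irrefl _
              trans := fun a b c hab hbc => lt_trans hab hbc }
    · intro v
      set B : V → Set V := fun y => {u | f u < f y ∧ u ≠ y ∧ (H u y ∨ H y u)} with hB
      have hBcard : ∀ y, (B y).ncard ≤ 2 * d := by
        intro y
        have h := hdeg y (Finset.mem_univ y)
        have he : B y = ↑(Finset.univ.filter fun u => f u < f y ∧ u ≠ y ∧ (H u y ∨ H y u)) := by
          ext u; simp [hB]
        rw [he, Set.ncard_coe_finset]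
        exact h
      set N : Set V := {x | H x v} with hN
      have hsub : {u | u = v ∨ ((f u < f v) ∧ ∃ p : G.Walk u v, p.length ≤ n + 1 ∧
          ∀ x ∈ p.support, ¬ (f x < f u))} ⊆ {v} ∪ (B v ∪ ⋃ x ∈ N.toFinset, B x) := by
        rintro u (rfl | ⟨hlt, p, hplen, hmin⟩)
        · exact Or.inl rfl
        · have huv : u ≠ v := fun h => by rw [h] at hlt; exact lt_irrefl _ hlt
          rcases key_lemma horient haug0 H htfa u v huv p hplen with h1 | h1 | ⟨x, hxs, hxu, hxv⟩
          · exact Or.inr (Or.inl ⟨hlt, huv, Or.inl h1⟩)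
          · exact Or.inr (Or.inl ⟨hlt, huv, Or.inr h1⟩)
          · by_cases hxu' : x = u
            · subst hxu'
              exact Or.inr (Or.inl ⟨hlt, huv, Or.inl (htfa.1 _ _ hxv)⟩)
            · have hux : f u < f x := by
                have hnlt := hmin x hxs
                rcases lt_trichotomy (f u) (f x) with h | h | h
                · exact h
                · exact absurd (hinj' h).symm hxu'
                · exact absurd h hnlt
              refine Or.inr (Or.inr ?_)
              rw [Set.mem_iUnion₂]
              exact ⟨x, by simp [Set.mem_toFinset, hN, htfa.1 _ _ hxv],
                ⟨hux, fun h => hxu' h.symm, Or.inr (htfa.1 _ _ hxu)⟩⟩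
      have hNcard : N.toFinset.card ≤ d := by
        rw [← Set.ncard_eq_toFinset_card']
        exact hindeg v
      calc {u | u = v ∨ ((f u < f v) ∧ ∃ p : G.Walk u v, p.length ≤ n + 1 ∧
              ∀ x ∈ p.support, ¬ (f x < f u))}.ncard
          ≤ ({v} ∪ (B v ∪ ⋃ x ∈ N.toFinset, B x)).ncard :=
            Set.ncard_le_ncard hsub (Set.toFinite _)
        _ ≤ ({v} : Set V).ncard + (B v ∪ ⋃ x ∈ N.toFinset, B x).ncard :=
            Set.ncard_union_le _ _
        _ ≤ 1 + ((B v).ncard + (⋃ x ∈ N.toFinset, B x).ncard) := by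
            have := Set.ncard_union_le (B v) (⋃ x ∈ N.toFinset, B x)
            simp only [Set.ncard_singleton]
            omega
        _ ≤ 1 + (2 * d + d * (2 * d)) := by
            have h1 := hBcard v
            have h2 : (⋃ x ∈ N.toFinset, B x).ncard ≤ N.toFinset.card * (2 * d) :=
              ncard_biUnion_le' N.toFinset B (2 * d) (fun a _ => hBcard a)
            have h3 : N.toFinset.card * (2 * d) ≤ d * (2 * d) :=
              Nat.mul_le_mul_right _ hNcard
            omega
        _ ≤ 2 * (d + 1) ^ 2 := by nlinarith
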